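/- For every natural number n and real α, the finite operator exponential exp(-Λ) applied to x^n, where Λ(p) = x·p'' + (α+1)·p', i.e. the polynomial ∑_{j=0}^{n} (-1)^j Λ^j(x^n)/j!, equals (-1)^n · n! · L_n^α(x). -/

import Mathlib

open Polynomial

/-- The operator Λ = x·d²/dx² + (α+1)·d/dx on real polynomials. -/
noncomputable def Lam (α : ℝ) (q : ℝ[X]) : ℝ[X] :=
  X * derivative (derivative q) + C (α + 1) * derivative q

/-- The generalized Laguerre polynomial
`L_n^α(x) = ∑_{i=0}^n (-1)^i (∏_{j=0}^{n-i-1}(n+α-j)/(n-i)!) x^i / i!`. -/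
noncomputable def lag (α : ℝ) (n : ℕ) : ℝ[X] :=
  ∑ i ∈ Finset.range (n + 1),
    C ((-1 : ℝ) ^ i * (∏ j ∈ Finset.range (n - i), ((n : ℝ) + α - j)) /
        ((Nat.factorial (n - i)) * (Nat.factorial i))) * X ^ i

lemma lam_C_mul (α c : ℝ) (p : ℝ[X]) : Lam α (C c * p) = C c * Lam α p := by
  simp only [Lam, derivative_C_mul]; ring

lemma lam_pow (α : ℝ) (k : ℕ) :
    Lam α (X ^ (k+1) : ℝ[X]) = C (((k:ℝ)+1) * (((k:ℝ)+1) + α)) * X ^ k := by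
  cases k with
  | zero => simp [Lam]; ring
  | succ l =>
      simp only [Lam, derivative_X_pow, derivative_C_mul, Nat.add_sub_cancel]
      push_cast
      ring_nf
      rw [show (4 + (l:ℝ)*4 + (l:ℝ)*α + (l:ℝ)^2 + α*2) =
            (2+(l:ℝ))*(1+(l:ℝ)) + (2+(l:ℝ))*(1+α) by ring]
      simp only [C_add, C_mul, C_1]
      ring

lemma iter_lam (α : ℝ) (n : ℕ) : ∀ j, j ≤ n →
    (Lam α)^[j] (X ^ n : ℝ[X]) =
      C (∏ m ∈ Finset.range j, (((n - m : ℕ) : ℝ) * (((n : ℝ) - m) + α))) * X ^ (n - j) := by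
  intro j
  induction j with
  | zero => simp
  | succ j ih =>
      intro hj
      have hj' : j ≤ n := Nat.le_of_succ_le hj
      rw [Function.iterate_succ_apply', ih hj', lam_C_mul]
      obtain ⟨k, hk⟩ : ∃ k, n - j = k + 1 := ⟨n - (j+1), by omega⟩
      rw [hk, lam_pow]
      rw [Finset.prod_range_succ]
      have h1 : n - (j+1) = k := by omega
      have h2 : ((n - j : ℕ) : ℝ) = (k : ℝ) + 1 := by rw [hk]; push_cast; ring
      have h3 : ((n : ℝ) - j) = (k : ℝ) + 1 := by
        have : (n : ℝ) = (j : ℝ) + (k : ℝ) + 1 := by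
          have : n = j + k + 1 := by omega
          rw [this]; push_cast; ring
        rw [this]; ring
      rw [h1, h2, h3, ← mul_assoc, ← C_mul]

theorem stmt_4 (α : ℝ) (n : ℕ) :
    (∑ j ∈ Finset.range (n + 1),
        C ((-1 : ℝ) ^ j / (Nat.factorial j)) * (Lam α)^[j] (X ^ n)) =
      C ((-1 : ℝ) ^ n * (Nat.factorial n)) * lag α n := by
  have h1 : ∀ j ∈ Finset.range (n+1),
      C ((-1:ℝ)^j / (Nat.factorial j)) * (Lam α)^[j] (X^n)
      = C ((-1:ℝ)^j / (Nat.factorial j) *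
          ∏ m ∈ Finset.range j, (((n-m:ℕ):ℝ) * ((n:ℝ) - m + α))) * X^(n-j) := by
    intro j hj
    rw [iter_lam α n j (by simpa [Nat.lt_succ_iff] using hj), ← mul_assoc, ← C_mul]
  rw [Finset.sum_congr rfl h1, lag, Finset.mul_sum, ← Finset.sum_range_reflect]
  refine Finset.sum_congr rfl ?_
  intro j hj
  simp only [Nat.add_sub_cancel]
  have hjn : j ≤ n := by simpa [Nat.lt_succ_iff] using hj
  have hnn : n - (n - j) = j := by omega
  rw [hnn, ← mul_assoc, ← C_mul]
  congr 1
  have hd : (∏ m ∈ Finset.range (n-j), ((n - m : ℕ) : ℝ)) = (n.descFactorial (n-j) : ℝ) := by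
    rw [Nat.descFactorial_eq_prod_range, Nat.cast_prod]
  have hp : (∏ m ∈ Finset.range (n-j), ((n:ℝ) - m + α))
      = ∏ m ∈ Finset.range (n-j), ((n:ℝ) + α - m) :=
    Finset.prod_congr rfl (fun _ _ => by ring)
  have hf : ((j).factorial : ℝ) * (n.descFactorial (n-j) : ℝ) = (n.factorial : ℝ) := by
    have := Nat.factorial_mul_descFactorial (Nat.sub_le n j)
    rw [hnn] at this
    exact_mod_cast this
  have hs2 : (-1:ℝ)^n * (-1:ℝ)^j = (-1:ℝ)^(n-j) := by
    rw [← pow_add, show n + j = 2*j+(n-j) by omega, pow_add, pow_mul]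
    norm_num
  rw [Finset.prod_mul_distrib, hd, hp, ← hf]
  have h2 : ((Nat.factorial j : ℝ)) ≠ 0 := Nat.cast_ne_zero.mpr (Nat.factorial_ne_zero _)
  have h3 : ((Nat.factorial (n-j) : ℝ)) ≠ 0 := Nat.cast_ne_zero.mpr (Nat.factorial_ne_zero _)
  rw [C_inj]
  field_simp
  linear_combination (-
    (∏ m ∈ Finset.range (n-j), ((n:ℝ) + α - m))) * hs2
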